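/- Fix constants 0 < δ < d and a sequence of positive reals (Eₙ)_{n ≤ 0} defined as follows: given nonincreasing integers (χₙ)_{n≤0} with χₙ < n, and nonnegative reals (Sₖ)_{k<0}, (Uₖ)_{k<0} ∈ [0,1] with the property that for every n and every k ∈ [χ_{n−1}, χₙ), S_k ≤ e^{δ(n−k−1)}, set Eₙ = e^{(d−δ)χₙ + nδ}/(1 − e^{δ−d}) + Σ_{k=χₙ}^{n−1} e^{(k+1)d} Uₖ^{1/α} Sₖ (with α > 0 and Uₖ^{1/α} ≤ 1). Then the sequence is strictly increasing: E_{n−1} < Eₙ for all n ≤ 0. -/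
import Mathlib

private lemma int_sum_split (g : ℤ → ℝ) {a b c : ℤ} (hab : a ≤ b) (hbc : b ≤ c) :
    ∑ k ∈ Finset.Ico a c, g k = (∑ k ∈ Finset.Ico a b, g k) + ∑ k ∈ Finset.Ico b c, g k := by
  rw [← Finset.Ico_union_Ico_eq_Ico hab hbc,
    Finset.sum_union (Finset.Ico_disjoint_Ico_consecutive a b c)]

private lemma intIco_succ_top (f : ℤ → ℝ) {a b : ℤ} (h : a ≤ b) :
    ∑ k ∈ Finset.Ico a (b + 1), f k = (∑ k ∈ Finset.Ico a b, f k) + f b := by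
  have h2 : Finset.Ico b (b + 1) = {b} := by ext x; simp; omega
  calc ∑ k ∈ Finset.Ico a (b + 1), f k
      = (∑ k ∈ Finset.Ico a b, f k) + ∑ k ∈ Finset.Ico b (b + 1), f k :=
        int_sum_split f h (by omega)
    _ = (∑ k ∈ Finset.Ico a b, f k) + f b := by rw [h2, Finset.sum_singleton]

private lemma int_telescope_aux (f : ℤ → ℝ) : ∀ m : ℕ, ∀ a : ℤ,
    ∑ k ∈ Finset.Ico a (a + m), (f (k + 1) - f k) = f (a + m) - f a := by
  intro m
  induction m with
  | zero => intro a; simp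
  | succ p ih =>
      intro a
      have h5 : (a + ((p : ℤ) + 1)) = (a + p) + 1 := by ring
      push_cast
      rw [h5, intIco_succ_top _ (by omega), ih a]
      ring

private lemma int_telescope (f : ℤ → ℝ) {a b : ℤ} (h : a ≤ b) :
    ∑ k ∈ Finset.Ico a b, (f (k + 1) - f k) = f b - f a := by
  have h6 : b = a + ((b - a).toNat : ℤ) := by omega
  rw [h6]
  exact int_telescope_aux f _ a

/-- **Strict monotonicity of the dominating sequence.**  Fix `0 < δ < d`, nonincreasing
integers `(χₙ)_{n≤0}` with `χₙ < n`, nonnegative `(Sₖ)`, `(Uₖ) ⊆ [0,1]` such that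
`Sₖ ≤ e^{δ(n-k-1)}` for `k ∈ [χ_{n-1}, χₙ)`, and set
`Eₙ = e^{(d-δ)χₙ + nδ}/(1 - e^{δ-d}) + Σ_{k=χₙ}^{n-1} e^{(k+1)d} Uₖ^{1/α} Sₖ`.
Then `E_{n-1} < Eₙ` for all `n ≤ 0`. -/
theorem dominating_sequence_strict_mono
    (d δ α : ℝ) (hδ : 0 < δ) (hδd : δ < d) (hα : 0 < α)
    (χ : ℤ → ℤ) (S U : ℤ → ℝ)
    (hχlt : ∀ n : ℤ, n ≤ 0 → χ n < n)
    (hχmono : ∀ n : ℤ, n ≤ 0 → χ (n - 1) ≤ χ n)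
    (hS0 : ∀ k, 0 ≤ S k) (hU0 : ∀ k, 0 ≤ U k) (hU1 : ∀ k, U k ≤ 1)
    (hSbound : ∀ n : ℤ, n ≤ 0 → ∀ k : ℤ, χ (n - 1) ≤ k → k < χ n →
      S k ≤ Real.exp (δ * ((n : ℝ) - (k : ℝ) - 1)))
    (E : ℤ → ℝ)
    (hE : ∀ n : ℤ, n ≤ 0 →
      E n = Real.exp ((d - δ) * (χ n : ℝ) + (n : ℝ) * δ) / (1 - Real.exp (δ - d))
        + ∑ k ∈ Finset.Ico (χ n) n,
            Real.exp (((k : ℝ) + 1) * d) * U k ^ (1 / α) * S k) :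
    ∀ n : ℤ, n ≤ 0 → E (n - 1) < E n := by
  intro n hn
  set a := χ (n - 1) with ha_def
  set b := χ n with hb_def
  have hab : a ≤ b := hχmono n hn
  have hbn : b < n := hχlt n hn
  have han : a < n - 1 := hχlt (n - 1) (by omega)
  have hq1 : Real.exp (δ - d) < 1 := by
    rw [Real.exp_lt_one_iff]; linarith
  have hq0 : 0 < 1 - Real.exp (δ - d) := by linarith
  set T : ℤ → ℝ := fun k =>
    Real.exp (((k : ℝ) + 1) * d) * U k ^ (1 / α) * S k with hT_def
  have hT0 : ∀ k, 0 ≤ T k := fun k => by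
    apply mul_nonneg (mul_nonneg (Real.exp_pos _).le _) (hS0 k)
    exact Real.rpow_nonneg (hU0 k) _
  set f : ℤ → ℝ := fun m =>
    Real.exp ((d - δ) * (m : ℝ) + (n : ℝ) * δ) / (1 - Real.exp (δ - d)) with hf_def
  have hf0 : ∀ m, 0 < f m := fun m => div_pos (Real.exp_pos _) hq0
  -- step function identity
  have hstep : ∀ k : ℤ, f (k + 1) - f k = Real.exp ((d - δ) * ((k : ℝ) + 1) + (n : ℝ) * δ) := by
    intro k
    have h1 : Real.exp ((d - δ) * ((k : ℝ) + 1) + (n : ℝ) * δ) * Real.exp (δ - d)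
        = Real.exp ((d - δ) * (k : ℝ) + (n : ℝ) * δ) := by
      rw [← Real.exp_add]; ring_nf
    simp only [hf_def]
    push_cast
    rw [div_sub_div_same, div_eq_iff (ne_of_gt hq0)]
    rw [mul_sub, mul_one, h1]
  -- bound on T for k in [a, b)
  have hTbound : ∀ k ∈ Finset.Ico a b, T k ≤ f (k + 1) - f k := by
    intro k hk
    rw [Finset.mem_Ico] at hk
    rw [hstep k]
    have hSk := hSbound n hn k hk.1 hk.2
    have hU : U k ^ (1 / α) ≤ 1 :=
      Real.rpow_le_one (hU0 k) (hU1 k) (by positivity)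
    calc T k ≤ Real.exp (((k : ℝ) + 1) * d) * 1 * S k := by
                apply mul_le_mul_of_nonneg_right _ (hS0 k)
                exact mul_le_mul_of_nonneg_left hU (Real.exp_pos _).le
      _ = Real.exp (((k : ℝ) + 1) * d) * S k := by ring
      _ ≤ Real.exp (((k : ℝ) + 1) * d) * Real.exp (δ * ((n : ℝ) - (k : ℝ) - 1)) :=
            mul_le_mul_of_nonneg_left hSk (Real.exp_pos _).le
      _ = Real.exp ((d - δ) * ((k : ℝ) + 1) + (n : ℝ) * δ) := by
            rw [← Real.exp_add]; ring_nf
  have hsum1 : ∑ k ∈ Finset.Ico a b, T k ≤ f b - f a := by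
    calc ∑ k ∈ Finset.Ico a b, T k ≤ ∑ k ∈ Finset.Ico a b, (f (k + 1) - f k) :=
          Finset.sum_le_sum hTbound
      _ = f b - f a := int_telescope f hab
  -- split sums
  have hsplit : ∑ k ∈ Finset.Ico a (n - 1), T k
      = (∑ k ∈ Finset.Ico a b, T k) + ∑ k ∈ Finset.Ico b (n - 1), T k :=
    int_sum_split T hab (by omega)
  have hsplit2 : ∑ k ∈ Finset.Ico b n, T k
      = (∑ k ∈ Finset.Ico b (n - 1), T k) + T (n - 1) := by
    have h3 := intIco_succ_top T (show b ≤ n - 1 by omega)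
    have h4 : n - 1 + 1 = n := by omega
    rw [h4] at h3
    exact h3
  -- expressions for E
  have hEn : E n = f b + ∑ k ∈ Finset.Ico b n, T k := hE n hn
  have hEn1 : E (n - 1) = f a * Real.exp (-δ) + ∑ k ∈ Finset.Ico a (n - 1), T k := by
    rw [hE (n - 1) (by omega)]
    congr 1
    simp only [hf_def]
    rw [div_mul_eq_mul_div, ← Real.exp_add]
    congr 1
    push_cast
    rw [← ha_def]
    congr 1
    ring
  have hexp : Real.exp (-δ) < 1 := by rw [Real.exp_lt_one_iff]; linarith
  have key : f a * Real.exp (-δ) < f a := by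
    nlinarith [hf0 a, Real.exp_pos (-δ)]
  rw [hEn, hEn1, hsplit, hsplit2]
  have := hT0 (n - 1)
  nlinarith [hsum1]
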